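/- Let f : R → T be a surjective graded homomorphism of G-graded rings. If P is a graded weakly 2-absorbing ideal of R with Ker(f) ⊆ P, then f(P) is a graded weakly 2-absorbing ideal of T. -/

import Mathlib

variable {G R T : Type*} [AddGroup G] [DecidableEq G] [Ring R] [Ring T]

/-- `x` is a homogeneous element of the graded ring. -/
def IsHomog {S : Type*} [Ring S] (𝒜 : G → AddSubgroup S) (x : S) : Prop := ∃ g, x ∈ 𝒜 g

/-- A two-sided ideal is graded if it contains all homogeneous components of its elements. -/
def IsGradedIdeal {S : Type*} [Ring S] (𝒜 : G → AddSubgroup S) [GradedRing 𝒜]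
    (P : TwoSidedIdeal S) : Prop :=
  ∀ a ∈ P, ∀ g : G, (DirectSum.decompose 𝒜 a g : S) ∈ P

/-- Graded weakly 2-absorbing: a proper graded ideal `P` such that for homogeneous `x, y, z`,
`0 ≠ xSySz ⊆ P` implies `xy ∈ P` or `yz ∈ P` or `xz ∈ P`. -/
def IsGradedWeakly2Absorbing {S : Type*} [Ring S] (𝒜 : G → AddSubgroup S) [GradedRing 𝒜]
    (P : TwoSidedIdeal S) : Prop :=
  P ≠ ⊤ ∧ IsGradedIdeal 𝒜 P ∧
    ∀ x y z : S, IsHomog 𝒜 x → IsHomog 𝒜 y → IsHomog 𝒜 z →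
      (∃ r s : S, x * r * y * s * z ≠ 0) → (∀ r s : S, x * r * y * s * z ∈ P) →
      x * y ∈ P ∨ y * z ∈ P ∨ x * z ∈ P

/-- A graded hom commutes with taking homogeneous components. -/
theorem decompose_map (𝒜 : G → AddSubgroup R) [GradedRing 𝒜] (ℬ : G → AddSubgroup T)
    [GradedRing ℬ] (f : R →+* T) (hf : ∀ g : G, ∀ x ∈ 𝒜 g, f x ∈ ℬ g) (p : R) (g : G) :
    (DirectSum.decompose ℬ (f p) g : T) = f (DirectSum.decompose 𝒜 p g : R) := by
  induction p using DirectSum.Decomposition.inductionOn 𝒜 with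
  | zero => simp
  | @homogeneous i m =>
    by_cases h : g = i
    · subst h
      rw [DirectSum.decompose_of_mem_same 𝒜 m.2,
        DirectSum.decompose_of_mem_same ℬ (hf g m.1 m.2)]
    · rw [DirectSum.decompose_of_mem_ne 𝒜 m.2 (Ne.symm h),
        DirectSum.decompose_of_mem_ne ℬ (hf _ m.1 m.2) (Ne.symm h), map_zero]
  | add a b ha hb =>
    simp [DirectSum.add_apply, ha, hb]

/-- If `f : R → T` is a surjective graded homomorphism, `P` is a graded weakly 2-absorbing
ideal of `R` and `Ker(f) ⊆ P`, then `f(P)` is a graded weakly 2-absorbing ideal of `T`. -/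
theorem stmt8 (𝒜 : G → AddSubgroup R) [GradedRing 𝒜] (ℬ : G → AddSubgroup T) [GradedRing ℬ]
    (f : R →+* T) (hf : ∀ g : G, ∀ x ∈ 𝒜 g, f x ∈ ℬ g) (hsurj : Function.Surjective f)
    (P : TwoSidedIdeal R) (hP : IsGradedWeakly2Absorbing 𝒜 P)
    (hker : ∀ x : R, f x = 0 → x ∈ P)
    (Q : TwoSidedIdeal T) (hQ : ∀ q, q ∈ Q ↔ ∃ p ∈ P, f p = q) :
    IsGradedWeakly2Absorbing ℬ Q := by
  obtain ⟨hPne, hPgr, hPabs⟩ := hP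
  -- every element of T with graded preimage
  have hpre : ∀ g : G, ∀ x ∈ ℬ g, ∃ a ∈ 𝒜 g, f a = x := by
    intro g x hx
    obtain ⟨b, hb⟩ := hsurj x
    refine ⟨(DirectSum.decompose 𝒜 b g : R), SetLike.coe_mem _, ?_⟩
    rw [← decompose_map 𝒜 ℬ f hf, hb, DirectSum.decompose_of_mem_same ℬ hx]
  refine ⟨?_, ?_, ?_⟩
  · intro h
    apply hPne
    have h1 : (1 : T) ∈ Q := by rw [h]; trivial
    obtain ⟨p, hp, hfp⟩ := (hQ 1).mp h1
    have : (1 : R) - p ∈ P := hker _ (by rw [map_sub, hfp, map_one, sub_self])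
    have h1P : (1 : R) ∈ P := by
      have := P.add_mem this hp
      simpa using this
    rw [eq_top_iff]
    intro x _
    simpa using P.mul_mem_left x 1 h1P
  · intro q hq g
    obtain ⟨p, hp, rfl⟩ := (hQ q).mp hq
    rw [decompose_map 𝒜 ℬ f hf]
    exact (hQ _).mpr ⟨_, hPgr p hp g, rfl⟩
  · rintro x y z ⟨gx, hx⟩ ⟨gy, hy⟩ ⟨gz, hz⟩ ⟨r0, s0, hne⟩ hall
    obtain ⟨a, ha, rfl⟩ := hpre gx x hx
    obtain ⟨b, hb, rfl⟩ := hpre gy y hy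
    obtain ⟨c, hc, rfl⟩ := hpre gz z hz
    have hallP : ∀ r s : R, a * r * b * s * c ∈ P := by
      intro r s
      have : f (a * r * b * s * c) ∈ Q := by
        simp only [map_mul]; exact hall (f r) (f s)
      obtain ⟨p, hp, hfp⟩ := (hQ _).mp this
      have : a * r * b * s * c - p ∈ P := hker _ (by rw [map_sub, hfp, sub_self])
      simpa using P.add_mem this hp
    have hneP : ∃ r s : R, a * r * b * s * c ≠ 0 := by
      obtain ⟨r', hr'⟩ := hsurj r0
      obtain ⟨s', hs'⟩ := hsurj s0
      refine ⟨r', s', fun h => hne ?_⟩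
      rw [← hr', ← hs']
      simp only [← map_mul, h, map_zero]
    rcases hPabs a b c ⟨gx, ha⟩ ⟨gy, hb⟩ ⟨gz, hc⟩ hneP hallP with h | h | h
    · exact Or.inl ((hQ _).mpr ⟨_, h, map_mul f a b⟩)
    · exact Or.inr (Or.inl ((hQ _).mpr ⟨_, h, map_mul f b c⟩))
    · exact Or.inr (Or.inr ((hQ _).mpr ⟨_, h, map_mul f a c⟩))
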